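/- Let T = { t : ℕ → Bool | t 0 = false }. There is no function f : (ℕ → Bool) → (ℕ → Bool) that is continuous on T (with respect to the product topology on ℕ → Bool, Bool discrete) and satisfies: for every t ∈ T, f t ∈ T and ( (∃ n, t n = true) ↔ (f t) 1 = true ). (This is the topological core of the theorem that there exist a HyperLTL sentence ∀π ∃π′. (F a_π) ↔ (X a_{π′}) and a transition system with trace set T whose satisfaction is not witnessed by any computable — hence continuous — Skolem function.) -/
import Mathlib


/-- With `T = { t : ℕ → Bool | t 0 = false }`, there is no function
`f : (ℕ → Bool) → (ℕ → Bool)` continuous on `T` (product topology, `Bool` discrete)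
such that for every `t ∈ T`, `f t ∈ T` and `(∃ n, t n = true) ↔ (f t) 1 = true`.
(Topological core of: no continuous — hence no computable — Skolem function witnesses
`𝔗 ⊨ ∀π ∃π′. (F a_π) ↔ (X a_{π′})` for the trace set `∅(2^{a})^ω`.) -/
theorem no_continuous_skolem :
    ¬ ∃ f : (ℕ → Bool) → (ℕ → Bool),
      ContinuousOn f {t : ℕ → Bool | t 0 = false} ∧
      ∀ t ∈ {t : ℕ → Bool | t 0 = false},
        f t ∈ {t : ℕ → Bool | t 0 = false} ∧ ((∃ n, t n = true) ↔ (f t) 1 = true) := by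
  rintro ⟨f, hcont, hspec⟩
  set S : Set (ℕ → Bool) := {t : ℕ → Bool | t 0 = false} with hS
  set t₀ : ℕ → Bool := fun _ => false with ht₀
  have ht₀S : t₀ ∈ S := rfl
  -- f t₀ 1 = false
  have h0 : f t₀ 1 = false := by
    have := (hspec t₀ ht₀S).2
    by_contra h
    have h' : f t₀ 1 = true := by
      cases hft : f t₀ 1 <;> simp_all
    obtain ⟨n, hn⟩ := this.mpr h'
    simp [ht₀] at hn
  -- the approximating sequence
  set u : ℕ → (ℕ → Bool) := fun k n => decide (n = k + 1) with hu
  have huS : ∀ k, u k ∈ S := by intro k; simp [hu, hS]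
  have hu1 : ∀ k, f (u k) 1 = true := by
    intro k
    exact (hspec (u k) (huS k)).2.mp ⟨k + 1, by simp [hu]⟩
  -- u k → t₀
  have htend : Filter.Tendsto u Filter.atTop (nhds t₀) := by
    rw [tendsto_pi_nhds]
    intro n
    have : ∀ k ≥ n, u k n = t₀ n := by
      intro k hk
      simp only [hu, ht₀, decide_eq_false_iff_not]
      omega
    exact Filter.Tendsto.congr' (by filter_upwards [Filter.eventually_ge_atTop n] using
      fun k hk => (this k hk).symm) tendsto_const_nhds
  have htendW : Filter.Tendsto u Filter.atTop (nhdsWithin t₀ S) :=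
    tendsto_nhdsWithin_of_tendsto_nhds_of_eventually_within u htend
      (Filter.Eventually.of_forall huS)
  have hft : Filter.Tendsto (fun k => f (u k) 1) Filter.atTop (nhds (f t₀ 1)) :=
    ((continuous_apply 1).continuousAt.tendsto).comp ((hcont t₀ ht₀S).tendsto.comp htendW)
  have : ∀ᶠ k in Filter.atTop, f (u k) 1 ∈ ({f t₀ 1} : Set Bool) :=
    hft ((isOpen_discrete _).mem_nhds (Set.mem_singleton _))
  obtain ⟨k, hk⟩ := this.exists
  rw [hu1 k, h0] at hk
  exact Bool.true_eq_false.mp hk
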